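/- (Main Theorem, case C = ∅, boundary strip) Under the same setup (positive run {(0,b): β₁≤b≤β₂} on the west boundary, all other boundary sites -1, no doubly-positive corner): for all n ≥ 2N and every site (a,b) with a=1 and β₁ ≤ b ≤ β₂, the estimate ô^n_{(a,b)} = -2, and this equals the true local solution o*_{(a,b)}. -/

import Mathlib

/-- Vertex set of the `(N+2) × (N+2)` grid graph: `{0, …, N+1}²`. -/
def gridV (N : ℕ) : Set (ℤ × ℤ) :=
  {p | 0 ≤ p.1 ∧ p.1 ≤ N + 1 ∧ 0 ≤ p.2 ∧ p.2 ≤ N + 1}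

/-- The interior `B = {1, …, N}²` of the grid. -/
def gridB (N : ℕ) : Set (ℤ × ℤ) :=
  {p | 1 ≤ p.1 ∧ p.1 ≤ N ∧ 1 ≤ p.2 ∧ p.2 ≤ N}

/-- The grid graph with the 4-neighbor topology. -/
def gridGraph (N : ℕ) : SimpleGraph (ℤ × ℤ) where
  Adj p q := p ∈ gridV N ∧ q ∈ gridV N ∧ |p.1 - q.1| + |p.2 - q.2| = 1
  symm := by
    constructor
    intro p q h
    refine ⟨h.2.1, h.1, ?_⟩
    rw [abs_sub_comm q.1, abs_sub_comm q.2]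
    exact h.2.2
  loopless := by
    constructor
    intro p h
    simp at h

/-- An edge is an odd bond for configuration `y` when its endpoints get different values. -/
def isOdd (y : ℤ × ℤ → ℤ) (e : Sym2 (ℤ × ℤ)) : Prop :=
  Sym2.lift ⟨fun u v => y u ≠ y v, fun u v => by simp [ne_comm]⟩ e

/-- Number of odd bonds on edges with at least one endpoint in the interior. -/
noncomputable def oddBonds (N : ℕ) (y : ℤ × ℤ → ℤ) : ℕ :=
  {e ∈ (gridGraph N).edgeSet | (∃ u ∈ e, u ∈ gridB N) ∧ isOdd y e}.ncard

/-- `y` is a valid configuration extending the boundary configuration `x`: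
it agrees with `x` off the interior and takes values in `{±1}` on the interior. -/
def isConfig (N : ℕ) (x y : ℤ × ℤ → ℤ) : Prop :=
  (∀ p, p ∉ gridB N → y p = x p) ∧ (∀ p ∈ gridB N, y p = 1 ∨ y p = -1)

/-- `O*_i(s, x)`: minimal number of odd bonds over configurations with `y i = s`. -/
noncomputable def Ostar (N : ℕ) (x : ℤ × ℤ → ℤ) (i : ℤ × ℤ) (s : ℤ) : ℕ :=
  sInf {n | ∃ y, isConfig N x y ∧ y i = s ∧ oddBonds N y = n}

/-- Minimal number of odd bonds over all configurations. -/
noncomputable def OstarGlobal (N : ℕ) (x : ℤ × ℤ → ℤ) : ℕ :=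
  sInf {n | ∃ y, isConfig N x y ∧ oddBonds N y = n}

/-- A global (MAP) solution. -/
def isGlobalSol (N : ℕ) (x y : ℤ × ℤ → ℤ) : Prop :=
  isConfig N x y ∧ oddBonds N y = OstarGlobal N x

/-- The boundary configuration takes values in `{±1}`. -/
def isBoundaryConfig (N : ℕ) (x : ℤ × ℤ → ℤ) : Prop :=
  ∀ p ∈ gridV N, p ∉ gridB N → x p = 1 ∨ x p = -1

/-- One-run boundary: the set `R⁺` of `+1` boundary sites induces a connected subgraph. -/
def oneRun (N : ℕ) (x : ℤ × ℤ → ℤ) : Prop :=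
  ((gridGraph N).induce {p | p ∈ gridV N ∧ p ∉ gridB N ∧ x p = 1}).Connected

/-- The four lattice neighbors of a point. -/
def nbrs (p : ℤ × ℤ) : Finset (ℤ × ℤ) :=
  {(p.1 + 1, p.2), (p.1 - 1, p.2), (p.1, p.2 + 1), (p.1, p.2 - 1)}


section Helpers

lemma sign_le_one' (z : ℤ) : z.sign ≤ 1 := by
  rcases lt_trichotomy z 0 with h|h|h
  · simp [Int.sign_eq_neg_one_of_neg h]
  · simp [h]
  · simp [Int.sign_eq_one_of_pos h]

lemma mem_gridB' {N : ℕ} {a b : ℤ} :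
    (a, b) ∈ gridB N ↔ 1 ≤ a ∧ a ≤ N ∧ 1 ≤ b ∧ b ≤ N := Iff.rfl

lemma mem_gridV' {N : ℕ} {a b : ℤ} :
    (a, b) ∈ gridV N ↔ 0 ≤ a ∧ a ≤ N + 1 ∧ 0 ≤ b ∧ b ≤ N + 1 := Iff.rfl

lemma mem_nbrs' {c d u v : ℤ} :
    (u, v) ∈ nbrs (c, d) ↔
      (u = c + 1 ∧ v = d) ∨ (u = c - 1 ∧ v = d) ∨ (u = c ∧ v = d + 1) ∨ (u = c ∧ v = d - 1) := by
  simp [nbrs, Prod.ext_iff]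

lemma sum3 (f : ℤ × ℤ → ℤ) (p q r : ℤ × ℤ) (hpq : p ≠ q) (hpr : p ≠ r) (hqr : q ≠ r) :
    ∑ k ∈ ({p, q, r} : Finset (ℤ × ℤ)), f k = f p + f q + f r := by
  rw [Finset.sum_insert (by simp [hpq, hpr]), Finset.sum_insert (by simp [hqr]),
    Finset.sum_singleton, add_assoc]

lemma nbrs_sdiff_N (a b : ℤ) :
    nbrs (a, b) \ {(a, b+1)} = ({(a+1, b), (a-1, b), (a, b-1)} : Finset (ℤ × ℤ)) := by
  ext ⟨u, v⟩; simp [nbrs, Prod.ext_iff]; omega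

lemma nbrs_sdiff_S (a b : ℤ) :
    nbrs (a, b) \ {(a, b-1)} = ({(a+1, b), (a-1, b), (a, b+1)} : Finset (ℤ × ℤ)) := by
  ext ⟨u, v⟩; simp [nbrs, Prod.ext_iff]; omega

lemma nbrs_sdiff_W (a b : ℤ) :
    nbrs (a, b) \ {(a-1, b)} = ({(a+1, b), (a, b+1), (a, b-1)} : Finset (ℤ × ℤ)) := by
  ext ⟨u, v⟩; simp [nbrs, Prod.ext_iff]; omega

lemma nbrs_sdiff_E (a b : ℤ) :
    nbrs (a, b) \ {(a+1, b)} = ({(a-1, b), (a, b+1), (a, b-1)} : Finset (ℤ × ℤ)) := by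
  ext ⟨u, v⟩; simp [nbrs, Prod.ext_iff]; omega

end Helpers

section Messages

variable (N : ℕ) (β₁ β₂ : ℤ) (x : ℤ × ℤ → ℤ) (m : ℕ → (ℤ × ℤ) → (ℤ × ℤ) → ℤ)

/-- Any message value is at most 1. -/
lemma msg_le_one (hxpm : isBoundaryConfig N x)
    (hbd : ∀ j ∈ gridV N, j ∉ gridB N → ∀ i ∈ nbrs j, ∀ n : ℕ, m n j i = x j)
    (h0 : ∀ j ∈ gridB N, ∀ i ∈ nbrs j, m 0 j i = 0)
    (hup : ∀ j ∈ gridB N, ∀ i ∈ nbrs j, ∀ n : ℕ, 0 < n →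
      m n j i = Int.sign (∑ k ∈ nbrs j \ {i}, m (n-1) k j)) :
    ∀ (n : ℕ) (k j : ℤ × ℤ), k ∈ gridV N → j ∈ nbrs k → m n k j ≤ 1 := by
  intro n k j hkV hj
  by_cases hkB : k ∈ gridB N
  · rcases Nat.eq_zero_or_pos n with rfl | hn
    · rw [h0 k hkB j hj]; norm_num
    · rw [hup k hkB j hj n hn]; exact sign_le_one' _
  · rw [hbd k hkV hkB j hj]
    rcases hxpm k hkV hkB with h | h <;> simp [h]

/-- Key convergence lemma: directional deadlines. -/
lemma msg_key (hN : 1 ≤ N) (hβ₁ : 1 ≤ β₁) (hββ : β₁ ≤ β₂) (hβ₂ : β₂ ≤ N)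
    (hxpm : isBoundaryConfig N x)
    (hx1 : ∀ p ∈ gridV N, p ∉ gridB N → (x p = 1 ↔ (p.1 = 0 ∧ β₁ ≤ p.2 ∧ p.2 ≤ β₂)))
    (hbd : ∀ j ∈ gridV N, j ∉ gridB N → ∀ i ∈ nbrs j, ∀ n : ℕ, m n j i = x j)
    (h0 : ∀ j ∈ gridB N, ∀ i ∈ nbrs j, m 0 j i = 0)
    (hup : ∀ j ∈ gridB N, ∀ i ∈ nbrs j, ∀ n : ℕ, 0 < n →
      m n j i = Int.sign (∑ k ∈ nbrs j \ {i}, m (n-1) k j)) :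
    ∀ n : ℕ, ∀ a b : ℤ, 1 ≤ a → a ≤ N → 1 ≤ b → b ≤ N →
      ((N - a + b ≤ (n : ℤ) → m n (a, b) (a, b+1) = -1) ∧
       (N - a + (N + 1 - b) ≤ (n : ℤ) → m n (a, b) (a, b-1) = -1) ∧
       (N - a + min b (N + 1 - b) ≤ (n : ℤ) → m n (a, b) (a-1, b) = -1) ∧
       (N - a + max b (N + 1 - b) ≤ (n : ℤ) → m n (a, b) (a+1, b) = -1)) := by
  have bsend : ∀ p : ℤ × ℤ, p ∈ gridV N → p ∉ gridB N → p.1 ≠ 0 →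
      ∀ i ∈ nbrs p, ∀ n : ℕ, m n p i = -1 := by
    intro p hV hB hp1 i hi n
    rw [hbd p hV hB i hi]
    refine (hxpm p hV hB).resolve_left (fun h1 => hp1 ?_)
    exact ((hx1 p hV hB).mp h1).1
  intro n
  induction n using Nat.strong_induction_on with
  | _ n IH =>
  intro a b ha1 haN hb1 hbN
  have hjB : (a, b) ∈ gridB N := by rw [mem_gridB']; omega
  have factE : ∀ n' : ℕ, n' < n → N - a - 1 + min b (N + 1 - b) ≤ (n' : ℤ) →
      m n' (a+1, b) (a, b) = -1 := by
    intro n' hn' hg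
    rcases eq_or_lt_of_le haN with h | h
    · exact bsend (a+1, b) (by rw [mem_gridV']; omega) (by rw [mem_gridB']; omega)
        (by show _ ≠ (0:ℤ); simp; omega) (a, b) (by rw [mem_nbrs']; omega) n'
    · have := ((IH n' hn' (a+1) b (by omega) (by omega) hb1 hbN).2.2.1) (by push_cast; omega)
      rw [show a + 1 - 1 = a by ring] at this
      exact this
  have factW : ∀ n' : ℕ, n' < n → 2 ≤ a → N - a + 1 + max b (N + 1 - b) ≤ (n' : ℤ) →
      m n' (a-1, b) (a, b) = -1 := by
    intro n' hn' ha2 hg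
    have := ((IH n' hn' (a-1) b (by omega) (by omega) hb1 hbN).2.2.2) (by push_cast; omega)
    rw [show a - 1 + 1 = a by ring] at this
    exact this
  have factS : ∀ n' : ℕ, n' < n → N - a + b - 1 ≤ (n' : ℤ) →
      m n' (a, b-1) (a, b) = -1 := by
    intro n' hn' hg
    rcases eq_or_lt_of_le hb1 with h | h
    · exact bsend (a, b-1) (by rw [mem_gridV']; omega) (by rw [mem_gridB']; omega)
        (by show _ ≠ (0:ℤ); simp; omega) (a, b) (by rw [mem_nbrs']; omega) n'
    · have := ((IH n' hn' a (b-1) ha1 haN (by omega) (by omega)).1) (by push_cast; omega)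
      rw [show b - 1 + 1 = b by ring] at this
      exact this
  have factN : ∀ n' : ℕ, n' < n → N - a + (N - b) ≤ (n' : ℤ) →
      m n' (a, b+1) (a, b) = -1 := by
    intro n' hn' hg
    rcases eq_or_lt_of_le hbN with h | h
    · exact bsend (a, b+1) (by rw [mem_gridV']; omega) (by rw [mem_gridB']; omega)
        (by show _ ≠ (0:ℤ); simp; omega) (a, b) (by rw [mem_nbrs']; omega) n'
    · have := ((IH n' hn' a (b+1) ha1 haN (by omega) (by omega)).2.1) (by push_cast; omega)
      rw [show b + 1 - 1 = b by ring] at this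
      exact this
  have thirdle : ∀ (n' : ℕ) (k : ℤ × ℤ), k ∈ gridV N → (a, b) ∈ nbrs k →
      m n' k (a, b) ≤ 1 := fun n' k h3 h2 =>
    msg_le_one N x m hxpm hbd h0 hup n' k (a, b) h3 h2
  have hWle : ∀ n' : ℕ, m n' (a-1, b) (a, b) ≤ 1 := fun n' =>
    thirdle n' (a-1, b) (by rw [mem_gridV']; omega) (by rw [mem_nbrs']; omega)
  have hEle : ∀ n' : ℕ, m n' (a+1, b) (a, b) ≤ 1 := fun n' =>
    thirdle n' (a+1, b) (by rw [mem_gridV']; omega) (by rw [mem_nbrs']; omega)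
  have hNle : ∀ n' : ℕ, m n' (a, b+1) (a, b) ≤ 1 := fun n' =>
    thirdle n' (a, b+1) (by rw [mem_gridV']; omega) (by rw [mem_nbrs']; omega)
  have hSle : ∀ n' : ℕ, m n' (a, b-1) (a, b) ≤ 1 := fun n' =>
    thirdle n' (a, b-1) (by rw [mem_gridV']; omega) (by rw [mem_nbrs']; omega)
  refine ⟨?_, ?_, ?_, ?_⟩
  -- North
  · intro hg
    obtain ⟨n', rfl⟩ : ∃ n', n = n' + 1 := ⟨n - 1, by omega⟩
    rw [hup (a, b) hjB (a, b+1) (by rw [mem_nbrs']; omega) _ (Nat.succ_pos _)]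
    try simp only [Nat.succ_sub_one, Nat.add_sub_cancel]
    rw [nbrs_sdiff_N, sum3 _ _ _ _ (by intro hh; simp only [Prod.mk.injEq] at hh; omega)
      (by intro hh; simp only [Prod.mk.injEq] at hh; omega) (by intro hh; simp only [Prod.mk.injEq] at hh; omega)]
    have h1 := factE n' (by omega) (by push_cast at hg ⊢; omega)
    have h2 := factS n' (by omega) (by push_cast at hg ⊢; omega)
    have h3 := hWle n'
    apply Int.sign_eq_neg_one_of_neg; omega
  -- South
  · intro hg
    obtain ⟨n', rfl⟩ : ∃ n', n = n' + 1 := ⟨n - 1, by omega⟩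
    rw [hup (a, b) hjB (a, b-1) (by rw [mem_nbrs']; omega) _ (Nat.succ_pos _)]
    try simp only [Nat.succ_sub_one, Nat.add_sub_cancel]
    rw [nbrs_sdiff_S, sum3 _ _ _ _ (by intro hh; simp only [Prod.mk.injEq] at hh; omega)
      (by intro hh; simp only [Prod.mk.injEq] at hh; omega) (by intro hh; simp only [Prod.mk.injEq] at hh; omega)]
    have h1 := factE n' (by omega) (by push_cast at hg ⊢; omega)
    have h2 := factN n' (by omega) (by push_cast at hg ⊢; omega)
    have h3 := hWle n'
    apply Int.sign_eq_neg_one_of_neg; omega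
  -- West
  · intro hg
    obtain ⟨n', rfl⟩ : ∃ n', n = n' + 1 := ⟨n - 1, by omega⟩
    rw [hup (a, b) hjB (a-1, b) (by rw [mem_nbrs']; omega) _ (Nat.succ_pos _)]
    try simp only [Nat.succ_sub_one, Nat.add_sub_cancel]
    rw [nbrs_sdiff_W, sum3 _ _ _ _ (by intro hh; simp only [Prod.mk.injEq] at hh; omega)
      (by intro hh; simp only [Prod.mk.injEq] at hh; omega) (by intro hh; simp only [Prod.mk.injEq] at hh; omega)]
    have h1 := factE n' (by omega) (by push_cast at hg ⊢; omega)
    rcases le_or_gt (b + b) (N + 1) with hside | hside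
    · -- min = b, use South
      have h2 := factS n' (by omega) (by push_cast at hg ⊢; omega)
      have h3 := hNle n'
      apply Int.sign_eq_neg_one_of_neg; omega
    · -- min = N+1-b, use North
      have h2 := factN n' (by omega) (by push_cast at hg ⊢; omega)
      have h3 := hSle n'
      apply Int.sign_eq_neg_one_of_neg; omega
  -- East
  · intro hg
    obtain ⟨n', rfl⟩ : ∃ n', n = n' + 1 := ⟨n - 1, by omega⟩
    rw [hup (a, b) hjB (a+1, b) (by rw [mem_nbrs']; omega) _ (Nat.succ_pos _)]
    try simp only [Nat.succ_sub_one, Nat.add_sub_cancel]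
    rw [nbrs_sdiff_E, sum3 _ _ _ _ (by intro hh; simp only [Prod.mk.injEq] at hh; omega)
      (by intro hh; simp only [Prod.mk.injEq] at hh; omega) (by intro hh; simp only [Prod.mk.injEq] at hh; omega)]
    have h1 := factN n' (by omega) (by push_cast at hg ⊢; omega)
    have h2 := factS n' (by omega) (by push_cast at hg ⊢; omega)
    have h3 := hWle n'
    apply Int.sign_eq_neg_one_of_neg; omega

end Messages
section Combinatorics

/-- The set of odd bonds counted by `oddBonds`. -/
def oddSet (N : ℕ) (y : ℤ × ℤ → ℤ) : Set (Sym2 (ℤ × ℤ)) :=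
  {e ∈ (gridGraph N).edgeSet | (∃ u ∈ e, u ∈ gridB N) ∧ isOdd y e}

lemma oddBonds_eq (N : ℕ) (y : ℤ × ℤ → ℤ) : oddBonds N y = (oddSet N y).ncard := rfl

lemma mem_oddSet {N : ℕ} {y : ℤ × ℤ → ℤ} {u v : ℤ × ℤ} :
    s(u, v) ∈ oddSet N y ↔
      (u ∈ gridV N ∧ v ∈ gridV N ∧ |u.1 - v.1| + |u.2 - v.2| = 1) ∧
      (u ∈ gridB N ∨ v ∈ gridB N) ∧ y u ≠ y v := by
  have hadj : s(u, v) ∈ (gridGraph N).edgeSet ↔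
      (u ∈ gridV N ∧ v ∈ gridV N ∧ |u.1 - v.1| + |u.2 - v.2| = 1) := by
    rw [SimpleGraph.mem_edgeSet]; rfl
  constructor
  · rintro ⟨he, ⟨w, hw, hwB⟩, hodd⟩
    refine ⟨hadj.mp he, ?_, by simpa [isOdd] using hodd⟩
    rw [Sym2.mem_iff] at hw
    rcases hw with rfl | rfl
    exacts [Or.inl hwB, Or.inr hwB]
  · rintro ⟨h1, hB, hne⟩
    refine ⟨hadj.mpr h1, ?_, by simpa [isOdd] using hne⟩
    rcases hB with h | h
    exacts [⟨u, by rw [Sym2.mem_iff]; left; rfl, h⟩, ⟨v, by rw [Sym2.mem_iff]; right; rfl, h⟩]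

lemma gridV_finite (N : ℕ) : (gridV N).Finite := by
  apply Set.Finite.subset ((Set.finite_Icc (0:ℤ) (N+1)).prod (Set.finite_Icc (0:ℤ) (N+1)))
  rintro ⟨u, v⟩ h
  rw [mem_gridV'] at h
  exact ⟨Set.mem_Icc.2 ⟨h.1, h.2.1⟩, Set.mem_Icc.2 ⟨h.2.2.1, h.2.2.2⟩⟩

lemma oddSet_finite (N : ℕ) (y : ℤ × ℤ → ℤ) : (oddSet N y).Finite := by
  apply Set.Finite.subset (((gridV_finite N).prod (gridV_finite N)).image
    (fun q : (ℤ×ℤ) × (ℤ×ℤ) => s(q.1, q.2)))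
  intro e
  refine Sym2.inductionOn e ?_
  intro u v he
  have h := (mem_oddSet.mp he).1
  exact ⟨(u, v), Set.mem_prod.2 ⟨h.1, h.2.1⟩, rfl⟩

lemma exists_flip (g : ℤ → ℤ) (c d : ℤ) (hcd : c ≤ d) (h : g c ≠ g d) :
    ∃ k, c ≤ k ∧ k < d ∧ g k ≠ g (k + 1) := by
  by_contra hcon
  push_neg at hcon
  apply h
  have key : ∀ j : ℕ, (j : ℤ) ≤ d - c → g (c + j) = g c := by
    intro j
    induction j with
    | zero => simp
    | succ i ih =>
      intro hj
      have h1 : g (c + i) = g c := ih (by push_cast at hj ⊢; omega)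
      have h2 : g (c + i) = g (c + i + 1) := hcon (c + i) (by omega) (by push_cast at hj ⊢; omega)
      rw [show ((c : ℤ) + (i + 1 : ℕ)) = c + i + 1 by push_cast; ring, ← h2, h1]
  have := key (d - c).toNat (by omega)
  rw [show c + ((d - c).toNat : ℤ) = d by omega] at this
  exact this.symm

lemma adj_cases {u v : ℤ × ℤ} (h : |u.1 - v.1| + |u.2 - v.2| = 1) :
    (v.1 = u.1 + 1 ∧ v.2 = u.2) ∨ (v.1 = u.1 - 1 ∧ v.2 = u.2) ∨
    (v.1 = u.1 ∧ v.2 = u.2 + 1) ∨ (v.1 = u.1 ∧ v.2 = u.2 - 1) := by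
  rcases abs_cases (u.1 - v.1) with ⟨h1, _⟩ | ⟨h1, _⟩ <;>
    rcases abs_cases (u.2 - v.2) with ⟨h2, _⟩ | ⟨h2, _⟩ <;> omega

lemma adj_horiz (k t : ℤ) : |((k, t) : ℤ×ℤ).1 - ((k+1, t) : ℤ×ℤ).1| +
    |((k, t) : ℤ×ℤ).2 - ((k+1, t) : ℤ×ℤ).2| = 1 := by
  show |k - (k+1)| + |t - t| = 1
  rw [show k - (k+1) = -1 by ring]; simp

lemma adj_vert (a k : ℤ) : |((a, k) : ℤ×ℤ).1 - ((a, k+1) : ℤ×ℤ).1| +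
    |((a, k) : ℤ×ℤ).2 - ((a, k+1) : ℤ×ℤ).2| = 1 := by
  show |a - a| + |k - (k+1)| = 1
  rw [show k - (k+1) = -1 by ring]; simp

/-- The all-minus configuration. -/
def yminus (N : ℕ) (x : ℤ × ℤ → ℤ) : ℤ × ℤ → ℤ :=
  fun p => if 1 ≤ p.1 ∧ p.1 ≤ N ∧ 1 ≤ p.2 ∧ p.2 ≤ N then -1 else x p

/-- The configuration which is `+1` at `q` and `-1` elsewhere in the interior. -/
def yflip (N : ℕ) (x : ℤ × ℤ → ℤ) (q : ℤ × ℤ) : ℤ × ℤ → ℤ :=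
  fun p => if p = q then 1 else yminus N x p

section WithX

variable {N : ℕ} {β₁ β₂ : ℤ} {x : ℤ × ℤ → ℤ}

lemma x_neg (hxpm : isBoundaryConfig N x)
    (hx1 : ∀ p ∈ gridV N, p ∉ gridB N → (x p = 1 ↔ (p.1 = 0 ∧ β₁ ≤ p.2 ∧ p.2 ≤ β₂)))
    {p : ℤ × ℤ} (hV : p ∈ gridV N) (hB : p ∉ gridB N)
    (h : ¬(p.1 = 0 ∧ β₁ ≤ p.2 ∧ p.2 ≤ β₂)) : x p = -1 :=
  (hxpm p hV hB).resolve_left (fun h1 => h ((hx1 p hV hB).mp h1))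

lemma yminus_config : isConfig N x (yminus N x) := by
  constructor
  · intro p hp
    exact if_neg (fun hc => hp hc)
  · intro p hp
    exact Or.inr (if_pos hp)

lemma yminus_neg (hxpm : isBoundaryConfig N x)
    (hx1 : ∀ p ∈ gridV N, p ∉ gridB N → (x p = 1 ↔ (p.1 = 0 ∧ β₁ ≤ p.2 ∧ p.2 ≤ β₂)))
    {p : ℤ × ℤ} (hV : p ∈ gridV N)
    (h : ¬(p.1 = 0 ∧ β₁ ≤ p.2 ∧ p.2 ≤ β₂)) : yminus N x p = -1 := by
  by_cases hB : p ∈ gridB N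
  · exact if_pos hB
  · have hB' : ¬(1 ≤ p.1 ∧ p.1 ≤ (N:ℤ) ∧ 1 ≤ p.2 ∧ p.2 ≤ (N:ℤ)) := fun hc => hB hc
    rw [yminus, if_neg hB']
    exact x_neg hxpm hx1 hV hB h

lemma yminus_pos
    (hx1 : ∀ p ∈ gridV N, p ∉ gridB N → (x p = 1 ↔ (p.1 = 0 ∧ β₁ ≤ p.2 ∧ p.2 ≤ β₂)))
    {p : ℤ × ℤ} (hV : p ∈ gridV N)
    (h : p.1 = 0 ∧ β₁ ≤ p.2 ∧ p.2 ≤ β₂) : yminus N x p = 1 := by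
  have hB : p ∉ gridB N := fun hc => by
    have : 1 ≤ p.1 := hc.1
    omega
  have hB' : ¬(1 ≤ p.1 ∧ p.1 ≤ (N:ℤ) ∧ 1 ≤ p.2 ∧ p.2 ≤ (N:ℤ)) := fun hc => hB hc
  rw [yminus, if_neg hB']
  exact (hx1 p hV hB).mpr h

lemma yminus_pm (hxpm : isBoundaryConfig N x) {p : ℤ × ℤ} (hV : p ∈ gridV N) :
    yminus N x p = 1 ∨ yminus N x p = -1 := by
  by_cases hB : p ∈ gridB N
  · exact Or.inr (if_pos hB)
  · have hB' : ¬(1 ≤ p.1 ∧ p.1 ≤ (N:ℤ) ∧ 1 ≤ p.2 ∧ p.2 ≤ (N:ℤ)) := fun hc => hB hc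
    rw [yminus, if_neg hB']
    exact hxpm p hV hB

end WithX

end Combinatorics
section OddSets

/-- The candidate odd bond in row `t` for the all-minus configuration. -/
def wedge (t : ℤ) : Sym2 (ℤ × ℤ) := s(((0:ℤ), t), ((1:ℤ), t))

lemma wedge_inj : Function.Injective wedge := by
  intro t t' h
  simp only [wedge, Sym2.eq_iff, Prod.mk.injEq] at h
  omega

lemma ncard_Icc' (c d : ℤ) : (Set.Icc c d).ncard = (d + 1 - c).toNat := by
  rw [← Finset.coe_Icc, Set.ncard_coe_finset, Int.card_Icc]

variable {N : ℕ} {β₁ β₂ : ℤ} {x : ℤ × ℤ → ℤ}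

lemma yminus_int {p : ℤ × ℤ} (hp : p ∈ gridB N) : yminus N x p = -1 := if_pos hp

lemma yflip_self (q : ℤ × ℤ) : yflip N x q q = 1 := if_pos rfl

lemma yflip_other {p q : ℤ × ℤ} (h : p ≠ q) : yflip N x q p = yminus N x p := if_neg h

lemma yflip_config {q : ℤ × ℤ} (hq : q ∈ gridB N) : isConfig N x (yflip N x q) := by
  constructor
  · intro p hp
    rw [yflip_other (fun hc => hp (by rw [hc]; exact hq))]
    exact yminus_config.1 p hp
  · intro p hp
    by_cases hpq : p = q
    · exact Or.inl (by rw [hpq]; exact yflip_self q)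
    · rw [yflip_other hpq]
      exact Or.inr (yminus_int hp)

lemma wedge_mem_yminus (hN : 1 ≤ N) (hβ₁ : 1 ≤ β₁) (hβ₂ : β₂ ≤ (N:ℤ))
    (hxpm : isBoundaryConfig N x)
    (hx1 : ∀ p ∈ gridV N, p ∉ gridB N → (x p = 1 ↔ (p.1 = 0 ∧ β₁ ≤ p.2 ∧ p.2 ≤ β₂)))
    {t : ℤ} (ht1 : β₁ ≤ t) (ht2 : t ≤ β₂) : wedge t ∈ oddSet N (yminus N x) := by
  refine mem_oddSet.mpr ⟨⟨by rw [mem_gridV']; omega, by rw [mem_gridV']; omega, ?_⟩,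
    Or.inr (by rw [mem_gridB']; omega), ?_⟩
  · show |(0:ℤ) - 1| + |t - t| = 1
    norm_num
  · rw [yminus_pos hx1 (by rw [mem_gridV']; omega) ⟨rfl, ht1, ht2⟩,
      yminus_int (show ((1:ℤ),t) ∈ gridB N by rw [mem_gridB']; omega)]
    norm_num

lemma oddSet_yminus (hN : 1 ≤ N) (hβ₁ : 1 ≤ β₁) (hβ₂ : β₂ ≤ (N:ℤ))
    (hxpm : isBoundaryConfig N x)
    (hx1 : ∀ p ∈ gridV N, p ∉ gridB N → (x p = 1 ↔ (p.1 = 0 ∧ β₁ ≤ p.2 ∧ p.2 ≤ β₂))) :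
    oddSet N (yminus N x) = wedge '' (Set.Icc β₁ β₂) := by
  have main : ∀ w z : ℤ × ℤ, w ∈ gridV N → z ∈ gridV N → |w.1 - z.1| + |w.2 - z.2| = 1 →
      (w ∈ gridB N ∨ z ∈ gridB N) → yminus N x w = 1 → yminus N x z = -1 →
      s(w, z) ∈ wedge '' (Set.Icc β₁ β₂) := by
    intro w z hwV hzV hadj hB hw hz
    have hw' : w.1 = 0 ∧ β₁ ≤ w.2 ∧ w.2 ≤ β₂ := by
      by_contra hc
      rw [yminus_neg hxpm hx1 hwV hc] at hw
      norm_num at hw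
    have hwB : w ∉ gridB N := fun hc => by have h1 : (1:ℤ) ≤ w.1 := hc.1; omega
    have hzB : z ∈ gridB N := hB.resolve_left hwB
    have hz1 : (1:ℤ) ≤ z.1 := hzB.1
    rcases adj_cases hadj with ⟨h1, h2⟩ | ⟨h1, h2⟩ | ⟨h1, h2⟩ | ⟨h1, h2⟩
    · have hw0 : w = ((0:ℤ), w.2) := by rw [Prod.ext_iff]; exact ⟨hw'.1, rfl⟩
      have hz0 : z = ((1:ℤ), w.2) := by rw [Prod.ext_iff]; exact ⟨by omega, h2⟩
      exact ⟨w.2, Set.mem_Icc.2 ⟨hw'.2.1, hw'.2.2⟩, by rw [wedge, ← hw0, ← hz0]⟩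
    · exfalso; omega
    · exfalso; omega
    · exfalso; omega
  ext e
  refine Sym2.inductionOn e ?_
  intro u v
  constructor
  · intro he
    obtain ⟨⟨huV, hvV, hadj⟩, hB, hne⟩ := mem_oddSet.mp he
    rcases yminus_pm hxpm huV with hu | hu <;> rcases yminus_pm hxpm hvV with hv | hv
    · exact absurd (hu.trans hv.symm) hne
    · exact main u v huV hvV hadj hB hu hv
    · rw [Sym2.eq_swap]
      exact main v u hvV huV (by rw [abs_sub_comm v.1, abs_sub_comm v.2]; exact hadj)
        hB.symm hv hu
    · exact absurd (hu.trans hv.symm) hne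
  · rintro ⟨t, ht, heq⟩
    rw [← heq]
    exact wedge_mem_yminus hN hβ₁ hβ₂ hxpm hx1 (Set.mem_Icc.1 ht).1 (Set.mem_Icc.1 ht).2

lemma oddBonds_yminus (hN : 1 ≤ N) (hβ₁ : 1 ≤ β₁) (hβ₂ : β₂ ≤ (N:ℤ))
    (hxpm : isBoundaryConfig N x)
    (hx1 : ∀ p ∈ gridV N, p ∉ gridB N → (x p = 1 ↔ (p.1 = 0 ∧ β₁ ≤ p.2 ∧ p.2 ≤ β₂))) :
    oddBonds N (yminus N x) = (β₂ + 1 - β₁).toNat := by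
  rw [oddBonds_eq, oddSet_yminus hN hβ₁ hβ₂ hxpm hx1,
    Set.ncard_image_of_injOn (wedge_inj.injOn), ncard_Icc']

end OddSets
section FlipSet

variable {N : ℕ} {β₁ β₂ : ℤ} {x : ℤ × ℤ → ℤ}

lemma oddSet_yflip (hN : 1 ≤ N) (hβ₁ : 1 ≤ β₁) (hβ₂ : β₂ ≤ (N:ℤ))
    (hxpm : isBoundaryConfig N x)
    (hx1 : ∀ p ∈ gridV N, p ∉ gridB N → (x p = 1 ↔ (p.1 = 0 ∧ β₁ ≤ p.2 ∧ p.2 ≤ β₂)))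
    {b : ℤ} (hb1 : β₁ ≤ b) (hb2 : b ≤ β₂) :
    oddSet N (yflip N x ((1:ℤ), b)) = wedge '' (Set.Icc β₁ β₂ \ {b}) ∪
      {s(((1:ℤ), b), ((2:ℤ), b)), s(((1:ℤ), b), ((1:ℤ), b+1)), s(((1:ℤ), b), ((1:ℤ), b-1))} := by
  set Y := yflip N x ((1:ℤ), b) with hY
  have hY1b : Y ((1:ℤ), b) = 1 := yflip_self _
  have hYother : ∀ p : ℤ × ℤ, p ≠ ((1:ℤ), b) → Y p = yminus N x p := fun p hp => yflip_other hp
  have hYneg : ∀ p : ℤ × ℤ, p ∈ gridV N → p ≠ ((1:ℤ), b) → ¬(p.1 = 0 ∧ β₁ ≤ p.2 ∧ p.2 ≤ β₂) →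
      Y p = -1 := by
    intro p hV hne hns
    rw [hYother p hne]
    exact yminus_neg hxpm hx1 hV hns
  have hYpos_iff : ∀ p : ℤ × ℤ, p ∈ gridV N → Y p = 1 →
      (p = ((1:ℤ), b) ∨ (p.1 = 0 ∧ β₁ ≤ p.2 ∧ p.2 ≤ β₂)) := by
    intro p hV hp
    by_cases hne : p = ((1:ℤ), b)
    · exact Or.inl hne
    · by_contra hc
      rw [not_or] at hc
      rw [hYneg p hV hc.1 hc.2] at hp
      norm_num at hp
  have hYpm : ∀ p : ℤ × ℤ, p ∈ gridV N → Y p = 1 ∨ Y p = -1 := by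
    intro p hV
    by_cases hne : p = ((1:ℤ), b)
    · exact Or.inl (by rw [hne]; exact hY1b)
    · rw [hYother p hne]; exact yminus_pm hxpm hV
  have main : ∀ w z : ℤ × ℤ, w ∈ gridV N → z ∈ gridV N → |w.1 - z.1| + |w.2 - z.2| = 1 →
      (w ∈ gridB N ∨ z ∈ gridB N) → Y w = 1 → Y z = -1 →
      s(w, z) ∈ wedge '' (Set.Icc β₁ β₂ \ {b}) ∪
        {s(((1:ℤ), b), ((2:ℤ), b)), s(((1:ℤ), b), ((1:ℤ), b+1)), s(((1:ℤ), b), ((1:ℤ), b-1))} := by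
    intro w z hwV hzV hadj hB hw hz
    rcases hYpos_iff w hwV hw with hw1 | hw0
    · -- w = (1,b)
      subst hw1
      have hb : ((1:ℤ), b).1 = 1 ∧ ((1:ℤ), b).2 = b := ⟨rfl, rfl⟩
      rcases adj_cases hadj with ⟨h1, h2⟩ | ⟨h1, h2⟩ | ⟨h1, h2⟩ | ⟨h1, h2⟩
      · -- z = (2, b)
        have hz0 : z = ((2:ℤ), b) := by
          rw [Prod.ext_iff]; constructor
          · rw [h1]; norm_num
          · rw [h2]
        right; left; rw [hz0]
      · -- z = (0, b): contradiction, Y (0,b) = 1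
        have hz0 : z = ((0:ℤ), b) := by
          rw [Prod.ext_iff]; constructor
          · rw [h1]; norm_num
          · rw [h2]
        exfalso
        rw [hz0, hYother _ (by intro hc; rw [Prod.mk.injEq] at hc; omega),
          yminus_pos hx1 (by rw [mem_gridV']; omega) ⟨rfl, hb1, hb2⟩] at hz
        norm_num at hz
      · -- z = (1, b+1)
        have hz0 : z = ((1:ℤ), b+1) := by
          rw [Prod.ext_iff]; exact ⟨h1, h2⟩
        right; right; left; rw [hz0]
      · -- z = (1, b-1)
        have hz0 : z = ((1:ℤ), b-1) := by
          rw [Prod.ext_iff]; exact ⟨h1, h2⟩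
        right; right; right; rw [hz0]; exact rfl
    · -- w = (0, t) with t in the strip
      have hwB : w ∉ gridB N := fun hc => by have h1 : (1:ℤ) ≤ w.1 := hc.1; omega
      have hzB : z ∈ gridB N := hB.resolve_left hwB
      have hz1 : (1:ℤ) ≤ z.1 := hzB.1
      rcases adj_cases hadj with ⟨h1, h2⟩ | ⟨h1, h2⟩ | ⟨h1, h2⟩ | ⟨h1, h2⟩
      · have hw0' : w = ((0:ℤ), w.2) := by rw [Prod.ext_iff]; exact ⟨hw0.1, rfl⟩
        have hz0 : z = ((1:ℤ), w.2) := by rw [Prod.ext_iff]; exact ⟨by omega, h2⟩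
        have htb : w.2 ≠ b := by
          intro hc
          rw [hz0, hc, hY1b] at hz
          norm_num at hz
        left
        exact ⟨w.2, ⟨Set.mem_Icc.2 ⟨hw0.2.1, hw0.2.2⟩, by simpa using htb⟩,
          by rw [wedge, ← hw0', ← hz0]⟩
      · exfalso; omega
      · exfalso; omega
      · exfalso; omega
  ext e
  refine Sym2.inductionOn e ?_
  intro u v
  constructor
  · intro he
    obtain ⟨⟨huV, hvV, hadj⟩, hB, hne⟩ := mem_oddSet.mp he
    rcases hYpm u huV with hu | hu <;> rcases hYpm v hvV with hv | hv
    · exact absurd (hu.trans hv.symm) hne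
    · exact main u v huV hvV hadj hB hu hv
    · rw [show s(u, v) = s(v, u) from Sym2.eq_swap]
      exact main v u hvV huV (by rw [abs_sub_comm v.1, abs_sub_comm v.2]; exact hadj)
        hB.symm hv hu
    · exact absurd (hu.trans hv.symm) hne
  · intro he
    rcases he with ⟨t, ht, heq⟩ | he
    · -- wedge edges
      rw [← heq]
      obtain ⟨ht', htb⟩ := ht
      obtain ⟨ht1, ht2⟩ := Set.mem_Icc.1 ht'
      have htb' : t ≠ b := by simpa using htb
      refine mem_oddSet.mpr ⟨⟨by rw [mem_gridV']; omega, by rw [mem_gridV']; omega, ?_⟩,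
        Or.inr (by rw [mem_gridB']; omega), ?_⟩
      · show |(0:ℤ) - 1| + |t - t| = 1
        norm_num
      · rw [hYother _ (by intro hc; rw [Prod.mk.injEq] at hc; omega),
          hYother _ (by intro hc; rw [Prod.mk.injEq] at hc; omega),
          yminus_pos hx1 (by rw [mem_gridV']; omega) ⟨rfl, ht1, ht2⟩,
          yminus_int (show ((1:ℤ), t) ∈ gridB N by rw [mem_gridB']; omega)]
        norm_num
    · simp only [Set.mem_insert_iff, Set.mem_singleton_iff] at he
      rcases he with heq | heq | heq <;> rw [heq]
      · -- east edge
        refine mem_oddSet.mpr ⟨⟨by rw [mem_gridV']; omega, by rw [mem_gridV']; omega, ?_⟩,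
          Or.inl (by rw [mem_gridB']; omega), ?_⟩
        · show |(1:ℤ) - 2| + |b - b| = 1
          norm_num
        · rw [hY1b, hYneg ((2:ℤ), b) (by rw [mem_gridV']; omega)
            (by intro hc; rw [Prod.mk.injEq] at hc; omega)
            (by intro hc; have h0 : (2:ℤ) = 0 := hc.1; omega)]
          norm_num
      · -- north edge
        refine mem_oddSet.mpr ⟨⟨by rw [mem_gridV']; omega, by rw [mem_gridV']; omega, ?_⟩,
          Or.inl (by rw [mem_gridB']; omega), ?_⟩
        · show |(1:ℤ) - 1| + |b - (b+1)| = 1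
          rw [show b - (b+1) = -1 by ring]; norm_num
        · rw [hY1b, hYneg ((1:ℤ), b+1) (by rw [mem_gridV']; omega)
            (by intro hc; rw [Prod.mk.injEq] at hc; omega)
            (by intro hc; have h0 : (1:ℤ) = 0 := hc.1; omega)]
          norm_num
      · -- south edge
        refine mem_oddSet.mpr ⟨⟨by rw [mem_gridV']; omega, by rw [mem_gridV']; omega, ?_⟩,
          Or.inl (by rw [mem_gridB']; omega), ?_⟩
        · show |(1:ℤ) - 1| + |b - (b-1)| = 1
          rw [show b - (b-1) = 1 by ring]; norm_num
        · rw [hY1b, hYneg ((1:ℤ), b-1) (by rw [mem_gridV']; omega)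
            (by intro hc; rw [Prod.mk.injEq] at hc; omega)
            (by intro hc; have h0 : (1:ℤ) = 0 := hc.1; omega)]
          norm_num

lemma oddBonds_yflip (hN : 1 ≤ N) (hβ₁ : 1 ≤ β₁) (hβ₂ : β₂ ≤ (N:ℤ))
    (hxpm : isBoundaryConfig N x)
    (hx1 : ∀ p ∈ gridV N, p ∉ gridB N → (x p = 1 ↔ (p.1 = 0 ∧ β₁ ≤ p.2 ∧ p.2 ≤ β₂)))
    {b : ℤ} (hb1 : β₁ ≤ b) (hb2 : b ≤ β₂) :
    oddBonds N (yflip N x ((1:ℤ), b)) = (β₂ + 1 - β₁).toNat + 2 := by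
  rw [oddBonds_eq, oddSet_yflip hN hβ₁ hβ₂ hxpm hx1 hb1 hb2]
  have hdisj : Disjoint (wedge '' (Set.Icc β₁ β₂ \ {b}))
      ({s(((1:ℤ), b), ((2:ℤ), b)), s(((1:ℤ), b), ((1:ℤ), b+1)),
        s(((1:ℤ), b), ((1:ℤ), b-1))} : Set (Sym2 (ℤ × ℤ))) := by
    rw [Set.disjoint_left]
    rintro e ⟨t, ht, rfl⟩ hmem
    simp only [Set.mem_insert_iff, Set.mem_singleton_iff] at hmem
    have h0 : ((0:ℤ), t) ∈ wedge t := by rw [wedge, Sym2.mem_iff]; left; rfl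
    rcases hmem with h | h | h <;>
      (rw [h, Sym2.mem_iff] at h0; rcases h0 with h0 | h0 <;>
        (rw [Prod.mk.injEq] at h0; omega))
  rw [Set.ncard_union_eq hdisj (((Set.finite_Icc _ _).diff).image _)
    ((Set.finite_singleton _).insert _ |>.insert _)]
  have h1 : (wedge '' (Set.Icc β₁ β₂ \ {b})).ncard = (β₂ + 1 - β₁).toNat - 1 := by
    rw [Set.ncard_image_of_injOn (wedge_inj.injOn),
      Set.ncard_diff_singleton_of_mem (Set.mem_Icc.2 ⟨hb1, hb2⟩),
      ncard_Icc']
  have h2 : ({s(((1:ℤ), b), ((2:ℤ), b)), s(((1:ℤ), b), ((1:ℤ), b+1)),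
      s(((1:ℤ), b), ((1:ℤ), b-1))} : Set (Sym2 (ℤ × ℤ))).ncard = 3 := by
    rw [Set.ncard_insert_of_notMem (by
        simp only [Set.mem_insert_iff, Set.mem_singleton_iff, Sym2.eq_iff, Prod.mk.injEq]
        omega) ((Set.finite_singleton _).insert _),
      Set.ncard_pair (by
        simp only [ne_eq, Sym2.eq_iff, Prod.mk.injEq]
        omega)]
  rw [h1, h2]
  omega

end FlipSet
section LowerBounds

variable {N : ℕ} {β₁ β₂ : ℤ} {x : ℤ × ℤ → ℤ}

lemma horiz_family (hN : 1 ≤ N) (hβ₁ : 1 ≤ β₁) (hβ₂ : β₂ ≤ (N:ℤ))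
    (hxpm : isBoundaryConfig N x)
    (hx1 : ∀ p ∈ gridV N, p ∉ gridB N → (x p = 1 ↔ (p.1 = 0 ∧ β₁ ≤ p.2 ∧ p.2 ≤ β₂)))
    (y : ℤ × ℤ → ℤ) (hy : isConfig N x y) :
    ∃ f : ℤ → Sym2 (ℤ × ℤ), ∀ t : ℤ, β₁ ≤ t → t ≤ β₂ →
      f t ∈ oddSet N y ∧ ∃ k : ℤ, 0 ≤ k ∧ k ≤ (N:ℤ) ∧ f t = s((k, t), (k+1, t)) := by
  have H : ∀ t : ℤ, ∃ e : Sym2 (ℤ × ℤ), β₁ ≤ t → t ≤ β₂ →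
      e ∈ oddSet N y ∧ ∃ k : ℤ, 0 ≤ k ∧ k ≤ (N:ℤ) ∧ e = s((k, t), (k+1, t)) := by
    intro t
    by_cases ht : β₁ ≤ t ∧ t ≤ β₂
    · obtain ⟨ht1, ht2⟩ := ht
      have hB0 : ((0:ℤ), t) ∉ gridB N := fun hc => by have h1 : (1:ℤ) ≤ 0 := hc.1; omega
      have hBN : ((N:ℤ)+1, t) ∉ gridB N := fun hc => by
        have h1 : ((N:ℤ)+1) ≤ N := hc.2.1; omega
      have hy0 : y ((0:ℤ), t) = 1 := by
        rw [hy.1 _ hB0]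
        exact (hx1 ((0:ℤ), t) (by rw [mem_gridV']; omega) hB0).mpr ⟨rfl, ht1, ht2⟩
      have hyN : y ((N:ℤ)+1, t) = -1 := by
        rw [hy.1 _ hBN]
        exact x_neg hxpm hx1 (by rw [mem_gridV']; omega) hBN
          (fun hc => by have h0 : ((N:ℤ)+1) = 0 := hc.1; omega)
      obtain ⟨k, hk0, hkN, hkflip⟩ := exists_flip (fun k => y (k, t)) 0 ((N:ℤ)+1)
        (by omega) (by show y ((0:ℤ), t) ≠ y ((N:ℤ)+1, t); rw [hy0, hyN]; norm_num)
      refine ⟨s((k, t), (k+1, t)), fun _ _ => ⟨?_, k, hk0, by omega, rfl⟩⟩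
      refine mem_oddSet.mpr ⟨⟨by rw [mem_gridV']; omega, by rw [mem_gridV']; omega,
        adj_horiz k t⟩, ?_, hkflip⟩
      rcases eq_or_lt_of_le hk0 with h | h
      · exact Or.inr (by rw [mem_gridB']; omega)
      · exact Or.inl (by rw [mem_gridB']; omega)
    · exact ⟨s(((0:ℤ), (0:ℤ)), ((0:ℤ), (0:ℤ))), fun h1 h2 => absurd ⟨h1, h2⟩ ht⟩
  choose f hf using H
  exact ⟨f, fun t h1 h2 => hf t h1 h2⟩

lemma horiz_injOn {y : ℤ × ℤ → ℤ} {f : ℤ → Sym2 (ℤ × ℤ)}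
    (hf : ∀ t : ℤ, β₁ ≤ t → t ≤ β₂ →
      f t ∈ oddSet N y ∧ ∃ k : ℤ, 0 ≤ k ∧ k ≤ (N:ℤ) ∧ f t = s((k, t), (k+1, t))) :
    Set.InjOn f (Set.Icc β₁ β₂) := by
  intro t ht t' ht' heq
  obtain ⟨ht1, ht2⟩ := Set.mem_Icc.1 ht
  obtain ⟨ht1', ht2'⟩ := Set.mem_Icc.1 ht'
  obtain ⟨-, k, -, -, hk⟩ := hf t ht1 ht2
  obtain ⟨-, k', -, -, hk'⟩ := hf t' ht1' ht2'
  have hmem : ((k:ℤ), t) ∈ f t' := by rw [← heq, hk, Sym2.mem_iff]; left; rfl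
  rw [hk', Sym2.mem_iff] at hmem
  rcases hmem with h | h <;> (rw [Prod.mk.injEq] at h; exact h.2)

lemma lower_L (hN : 1 ≤ N) (hβ₁ : 1 ≤ β₁) (hβ₂ : β₂ ≤ (N:ℤ))
    (hxpm : isBoundaryConfig N x)
    (hx1 : ∀ p ∈ gridV N, p ∉ gridB N → (x p = 1 ↔ (p.1 = 0 ∧ β₁ ≤ p.2 ∧ p.2 ≤ β₂)))
    (y : ℤ × ℤ → ℤ) (hy : isConfig N x y) :
    (β₂ + 1 - β₁).toNat ≤ oddBonds N y := by
  obtain ⟨f, hf⟩ := horiz_family hN hβ₁ hβ₂ hxpm hx1 y hy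
  have hsub : f '' Set.Icc β₁ β₂ ⊆ oddSet N y := by
    rintro e ⟨t, ht, rfl⟩
    exact (hf t (Set.mem_Icc.1 ht).1 (Set.mem_Icc.1 ht).2).1
  calc (β₂ + 1 - β₁).toNat = (f '' Set.Icc β₁ β₂).ncard := by
        rw [Set.ncard_image_of_injOn (horiz_injOn hf), ncard_Icc']
    _ ≤ (oddSet N y).ncard := Set.ncard_le_ncard hsub (oddSet_finite N y)
    _ = oddBonds N y := (oddBonds_eq N y).symm

lemma lower_plus (hN : 1 ≤ N) (hβ₁ : 1 ≤ β₁) (hβ₂ : β₂ ≤ (N:ℤ))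
    (hxpm : isBoundaryConfig N x)
    (hx1 : ∀ p ∈ gridV N, p ∉ gridB N → (x p = 1 ↔ (p.1 = 0 ∧ β₁ ≤ p.2 ∧ p.2 ≤ β₂)))
    {b : ℤ} (hb1 : β₁ ≤ b) (hb2 : b ≤ β₂)
    (y : ℤ × ℤ → ℤ) (hy : isConfig N x y) (hyb : y ((1:ℤ), b) = 1) :
    (β₂ + 1 - β₁).toNat + 2 ≤ oddBonds N y := by
  obtain ⟨f, hf⟩ := horiz_family hN hβ₁ hβ₂ hxpm hx1 y hy
  -- column endpoints
  have hB0 : ((1:ℤ), (0:ℤ)) ∉ gridB N := fun hc => by have h1 : (1:ℤ) ≤ 0 := hc.2.2.1; omega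
  have hBN : ((1:ℤ), (N:ℤ)+1) ∉ gridB N := fun hc => by
    have h1 : ((N:ℤ)+1) ≤ N := hc.2.2.2; omega
  have hy0 : y ((1:ℤ), (0:ℤ)) = -1 := by
    rw [hy.1 _ hB0]
    exact x_neg hxpm hx1 (by rw [mem_gridV']; omega) hB0
      (fun hc => by have h0 : (1:ℤ) = 0 := hc.1; omega)
  have hyN : y ((1:ℤ), (N:ℤ)+1) = -1 := by
    rw [hy.1 _ hBN]
    exact x_neg hxpm hx1 (by rw [mem_gridV']; omega) hBN
      (fun hc => by have h0 : (1:ℤ) = 0 := hc.1; omega)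
  obtain ⟨k₁, hk₁0, hk₁b, hflip₁⟩ := exists_flip (fun k => y ((1:ℤ), k)) 0 b
    (by omega) (by show y ((1:ℤ), (0:ℤ)) ≠ y ((1:ℤ), b); rw [hy0, hyb]; norm_num)
  obtain ⟨k₂, hk₂b, hk₂N, hflip₂⟩ := exists_flip (fun k => y ((1:ℤ), k)) b ((N:ℤ)+1)
    (by omega) (by show y ((1:ℤ), b) ≠ y ((1:ℤ), (N:ℤ)+1); rw [hyN, hyb]; norm_num)
  have he₁ : s(((1:ℤ), k₁), ((1:ℤ), k₁+1)) ∈ oddSet N y := by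
    refine mem_oddSet.mpr ⟨⟨by rw [mem_gridV']; omega, by rw [mem_gridV']; omega,
      adj_vert 1 k₁⟩, ?_, hflip₁⟩
    rcases eq_or_lt_of_le hk₁0 with h | h
    · exact Or.inr (by rw [mem_gridB']; omega)
    · exact Or.inl (by rw [mem_gridB']; omega)
  have he₂ : s(((1:ℤ), k₂), ((1:ℤ), k₂+1)) ∈ oddSet N y := by
    refine mem_oddSet.mpr ⟨⟨by rw [mem_gridV']; omega, by rw [mem_gridV']; omega,
      adj_vert 1 k₂⟩, Or.inl (by rw [mem_gridB']; omega), hflip₂⟩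
  have hne12 : s(((1:ℤ), k₁), ((1:ℤ), k₁+1)) ≠ s(((1:ℤ), k₂), ((1:ℤ), k₂+1)) := by
    simp only [ne_eq, Sym2.eq_iff, Prod.mk.injEq]
    omega
  have hdisj : Disjoint (f '' Set.Icc β₁ β₂)
      ({s(((1:ℤ), k₁), ((1:ℤ), k₁+1)), s(((1:ℤ), k₂), ((1:ℤ), k₂+1))} : Set (Sym2 (ℤ × ℤ))) := by
    rw [Set.disjoint_left]
    rintro e ⟨t, ht, rfl⟩ hmem
    obtain ⟨-, k, -, -, hk⟩ := hf t (Set.mem_Icc.1 ht).1 (Set.mem_Icc.1 ht).2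
    have h1 : ((k:ℤ), t) ∈ f t := by rw [hk, Sym2.mem_iff]; left; rfl
    have h2 : ((k+1:ℤ), t) ∈ f t := by rw [hk, Sym2.mem_iff]; right; rfl
    simp only [Set.mem_insert_iff, Set.mem_singleton_iff] at hmem
    rcases hmem with h | h <;>
      (rw [h, Sym2.mem_iff] at h1 h2;
       rcases h1 with h1 | h1 <;> rcases h2 with h2 | h2 <;>
         (rw [Prod.mk.injEq] at h1 h2; omega))
  have hsub : f '' Set.Icc β₁ β₂ ∪
      {s(((1:ℤ), k₁), ((1:ℤ), k₁+1)), s(((1:ℤ), k₂), ((1:ℤ), k₂+1))} ⊆ oddSet N y := by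
    rintro e (⟨t, ht, rfl⟩ | he)
    · exact (hf t (Set.mem_Icc.1 ht).1 (Set.mem_Icc.1 ht).2).1
    · simp only [Set.mem_insert_iff, Set.mem_singleton_iff] at he
      rcases he with rfl | rfl
      exacts [he₁, he₂]
  have hcard : (f '' Set.Icc β₁ β₂ ∪
      {s(((1:ℤ), k₁), ((1:ℤ), k₁+1)), s(((1:ℤ), k₂), ((1:ℤ), k₂+1))}).ncard
      = (β₂ + 1 - β₁).toNat + 2 := by
    rw [Set.ncard_union_eq hdisj ((Set.finite_Icc _ _).image f)
      ((Set.finite_singleton _).insert _),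
      Set.ncard_image_of_injOn (horiz_injOn hf), ncard_Icc', Set.ncard_pair hne12]
  rw [oddBonds_eq, ← hcard]
  exact Set.ncard_le_ncard hsub (oddSet_finite N y)

lemma Ostar_minus (hN : 1 ≤ N) (hβ₁ : 1 ≤ β₁) (hββ : β₁ ≤ β₂) (hβ₂ : β₂ ≤ (N:ℤ))
    (hxpm : isBoundaryConfig N x)
    (hx1 : ∀ p ∈ gridV N, p ∉ gridB N → (x p = 1 ↔ (p.1 = 0 ∧ β₁ ≤ p.2 ∧ p.2 ≤ β₂)))
    {b : ℤ} (hb1 : β₁ ≤ b) (hb2 : b ≤ β₂) :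
    Ostar N x ((1:ℤ), b) (-1) = (β₂ + 1 - β₁).toNat := by
  have hmem : (β₂ + 1 - β₁).toNat ∈
      {n | ∃ y, isConfig N x y ∧ y ((1:ℤ), b) = -1 ∧ oddBonds N y = n} :=
    ⟨yminus N x, yminus_config,
      yminus_int (show ((1:ℤ), b) ∈ gridB N by rw [mem_gridB']; omega),
      oddBonds_yminus hN hβ₁ hβ₂ hxpm hx1⟩
  refine le_antisymm (Nat.sInf_le hmem) (le_csInf ⟨_, hmem⟩ ?_)
  rintro n ⟨y, hy, -, refl⟩
  rw [← refl]
  exact lower_L hN hβ₁ hβ₂ hxpm hx1 y hy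

lemma Ostar_plus (hN : 1 ≤ N) (hβ₁ : 1 ≤ β₁) (hββ : β₁ ≤ β₂) (hβ₂ : β₂ ≤ (N:ℤ))
    (hxpm : isBoundaryConfig N x)
    (hx1 : ∀ p ∈ gridV N, p ∉ gridB N → (x p = 1 ↔ (p.1 = 0 ∧ β₁ ≤ p.2 ∧ p.2 ≤ β₂)))
    {b : ℤ} (hb1 : β₁ ≤ b) (hb2 : b ≤ β₂) :
    Ostar N x ((1:ℤ), b) 1 = (β₂ + 1 - β₁).toNat + 2 := by
  have hmem : (β₂ + 1 - β₁).toNat + 2 ∈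
      {n | ∃ y, isConfig N x y ∧ y ((1:ℤ), b) = 1 ∧ oddBonds N y = n} :=
    ⟨yflip N x ((1:ℤ), b),
      yflip_config (show ((1:ℤ), b) ∈ gridB N by rw [mem_gridB']; omega),
      yflip_self _, oddBonds_yflip hN hβ₁ hβ₂ hxpm hx1 hb1 hb2⟩
  refine le_antisymm (Nat.sInf_le hmem) (le_csInf ⟨_, hmem⟩ ?_)
  rintro n ⟨y, hy, hyb, refl⟩
  rw [← refl]
  exact lower_plus hN hβ₁ hβ₂ hxpm hx1 hb1 hb2 y hy hyb

end LowerBounds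

/-- Main theorem, case `C = ∅`, boundary strip: with the positive run
`{(0,b) : β₁ ≤ b ≤ β₂}` on the west boundary and all other boundary sites `-1`, for
all `n ≥ 2N` the estimate at every site `(1,b)` with `β₁ ≤ b ≤ β₂` equals `-2`, and
this equals the true local solution there. -/
theorem main_caseC0_boundary_strip
    (N : ℕ) (hN : 1 ≤ N) (β₁ β₂ : ℤ) (hβ₁ : 1 ≤ β₁) (hββ : β₁ ≤ β₂) (hβ₂ : β₂ ≤ N)
    (x : ℤ × ℤ → ℤ) (hxpm : isBoundaryConfig N x)
    (hx1 : ∀ p ∈ gridV N, p ∉ gridB N →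
      (x p = 1 ↔ (p.1 = 0 ∧ β₁ ≤ p.2 ∧ p.2 ≤ β₂)))
    (m : ℕ → (ℤ × ℤ) → (ℤ × ℤ) → ℤ)
    -- boundary condition: boundary senders always send their boundary value
    (hbd : ∀ j ∈ gridV N, j ∉ gridB N → ∀ i ∈ nbrs j, ∀ n : ℕ, m n j i = x j)
    -- initialization: interior senders start at 0
    (h0 : ∀ j ∈ gridB N, ∀ i ∈ nbrs j, m 0 j i = 0)
    -- sign update for interior senders
    (hup : ∀ j ∈ gridB N, ∀ i ∈ nbrs j, ∀ n : ℕ, 0 < n →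
      m n j i = Int.sign (∑ k ∈ nbrs j \ {i}, m (n-1) k j))
    :
    ∀ n : ℕ, 2 * N ≤ n → ∀ b : ℤ, β₁ ≤ b → b ≤ β₂ →
      (m n (0, b) (1, b) + m n (1, b - 1) (1, b) +
        m n (2, b) (1, b) + m n (1, b + 1) (1, b) = -2) ∧
      ((Ostar N x (1, b) (-1) : ℤ) - (Ostar N x (1, b) 1 : ℤ) = -2) := by
  intro n hn b hb1 hb2
  have hb1' : (1:ℤ) ≤ b := le_trans hβ₁ hb1
  have hb2' : b ≤ (N:ℤ) := le_trans hb2 hβ₂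
  have key := msg_key N β₁ β₂ x m hN hβ₁ hββ hβ₂ hxpm hx1 hbd h0 hup
  constructor
  · -- message estimate
    have hW : m n ((0:ℤ), b) ((1:ℤ), b) = 1 := by
      have hB : ((0:ℤ), b) ∉ gridB N := fun hc => by have h1 : (1:ℤ) ≤ 0 := hc.1; omega
      rw [hbd ((0:ℤ), b) (by rw [mem_gridV']; omega) hB ((1:ℤ), b)
        (by rw [mem_nbrs']; omega) n]
      exact (hx1 _ (by rw [mem_gridV']; omega) hB).mpr ⟨rfl, hb1, hb2⟩
    have hS : m n ((1:ℤ), b - 1) ((1:ℤ), b) = -1 := by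
      rcases eq_or_lt_of_le hb1' with h | h
      · have hV : ((1:ℤ), b-1) ∈ gridV N := by rw [mem_gridV']; omega
        have hB : ((1:ℤ), b-1) ∉ gridB N := fun hc => by
          have h1 : (1:ℤ) ≤ b-1 := hc.2.2.1; omega
        rw [hbd _ hV hB ((1:ℤ), b) (by rw [mem_nbrs']; omega) n]
        exact x_neg hxpm hx1 hV hB (fun hc => by have h0 : (1:ℤ) = 0 := hc.1; omega)
      · have := (key n 1 (b-1) (by omega) (by push_cast; omega) (by omega)
          (by omega)).1 (by push_cast; omega)
        rw [show b - 1 + 1 = b by ring] at this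
        exact this
    have hE : m n ((2:ℤ), b) ((1:ℤ), b) = -1 := by
      rcases eq_or_lt_of_le hN with h | h
      · have hV : ((2:ℤ), b) ∈ gridV N := by rw [mem_gridV']; omega
        have hB : ((2:ℤ), b) ∉ gridB N := fun hc => by
          have h1 : (2:ℤ) ≤ (N:ℤ) := hc.2.1; omega
        rw [hbd _ hV hB ((1:ℤ), b) (by rw [mem_nbrs']; omega) n]
        exact x_neg hxpm hx1 hV hB (fun hc => by have h0 : (2:ℤ) = 0 := hc.1; omega)
      · have := (key n 2 b (by omega) (by push_cast; omega) (by omega)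
          (by omega)).2.2.1 (by push_cast; omega)
        rw [show (2:ℤ) - 1 = 1 by norm_num] at this
        exact this
    have hNN : m n ((1:ℤ), b + 1) ((1:ℤ), b) = -1 := by
      rcases eq_or_lt_of_le hb2' with h | h
      · have hV : ((1:ℤ), b+1) ∈ gridV N := by rw [mem_gridV']; omega
        have hB : ((1:ℤ), b+1) ∉ gridB N := fun hc => by
          have h1 : b+1 ≤ (N:ℤ) := hc.2.2.2; omega
        rw [hbd _ hV hB ((1:ℤ), b) (by rw [mem_nbrs']; omega) n]
        exact x_neg hxpm hx1 hV hB (fun hc => by have h0 : (1:ℤ) = 0 := hc.1; omega)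
      · have := (key n 1 (b+1) (by omega) (by push_cast; omega) (by omega)
          (by omega)).2.1 (by push_cast; omega)
        rw [show b + 1 - 1 = b by ring] at this
        exact this
    rw [hW, hS, hE, hNN]
    norm_num
  · rw [Ostar_minus hN hβ₁ hββ hβ₂ hxpm hx1 hb1 hb2,
      Ostar_plus hN hβ₁ hββ hβ₂ hxpm hx1 hb1 hb2]
    push_cast
    ring
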